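/- A rooted graph G is path commuting if and only if for every n, the matrices V_n, Λ_{n,+j}, and Λ_{n,-j} (j = 0, 1, 2, …) all pairwise commute, where V_n is the adjacency matrix of the subgraph induced on S_n, Λ_{n,+j} = E_n^T … E_{n+j}^T E_{n+j} … E_n, and Λ_{n,-j} = E_{n-1} … E_{n-j} E_{n-j}^T … E_{n-1}^T (with Λ_{n,-j} = Id for j > n). -/
import Mathlib


open SimpleGraph Matrix

attribute [local instance] Classical.propDecidable

/-- A rooted graph: connected, locally finite simple graph with a distinguished root.
The finiteness of spheres is a consequence of connectedness and local finiteness,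
recorded here as a field for convenience. -/
structure RootedGraph (V : Type*) where
  G : SimpleGraph V
  o : V
  connected : G.Connected
  locFin : ∀ v : V, (G.neighborSet v).Finite
  sphereFin : ∀ n : ℕ, {v : V | G.dist o v = n}.Finite

namespace RootedGraph

variable {V : Type*} (R : RootedGraph V)

/-- The sphere of radius `n` around the root. -/
def sphere (n : ℕ) : Set V := {v : V | R.G.dist R.o v = n}

noncomputable instance (n : ℕ) : Fintype ↥(R.sphere n) := (R.sphereFin n).fintype

/-- A k-forward path from `x` to `y` (both in sphere `n`): a path of length `2k`
going up `k` spheres and then back down, encoded as a function `ℕ → V`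
that is constantly `y` from index `2k` on. -/
def IsForwardPath (n k : ℕ) (x y : V) (p : ℕ → V) : Prop :=
  p 0 = x ∧ (∀ j, 2*k ≤ j → p j = y) ∧
  (∀ j, j < 2*k → R.G.Adj (p j) (p (j+1))) ∧
  (∀ j, j ≤ k → p j ∈ R.sphere (n + j)) ∧
  (∀ j, k ≤ j → j ≤ 2*k → p j ∈ R.sphere (n + (2*k - j)))

/-- A k-backward path from `x` to `y` (both in sphere `n`): a path of length `2k`
going down `k` spheres (so `k ≤ n`) and then back up. -/
def IsBackwardPath (n k : ℕ) (x y : V) (p : ℕ → V) : Prop :=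
  k ≤ n ∧ p 0 = x ∧ (∀ j, 2*k ≤ j → p j = y) ∧
  (∀ j, j < 2*k → R.G.Adj (p j) (p (j+1))) ∧
  (∀ j, j ≤ k → p j ∈ R.sphere (n - j)) ∧
  (∀ j, k ≤ j → j ≤ 2*k → p j ∈ R.sphere (n - (2*k - j)))

/-- Number of (k,ℓ)-forward-backward paths from `x` to `y`. -/
noncomputable def fbCount (n k l : ℕ) (x y : V) : ℕ :=
  Nat.card {pq : (ℕ → V) × (ℕ → V) //
    R.IsForwardPath n k x (pq.1 (2*k)) pq.1 ∧
    R.IsBackwardPath n l (pq.1 (2*k)) y pq.2}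

/-- Number of (ℓ,k)-backward-forward paths from `x` to `y`. -/
noncomputable def bfCount (n l k : ℕ) (x y : V) : ℕ :=
  Nat.card {pq : (ℕ → V) × (ℕ → V) //
    R.IsBackwardPath n l x (pq.1 (2*l)) pq.1 ∧
    R.IsForwardPath n k (pq.1 (2*l)) y pq.2}

/-- Number of tailed-k-forward paths from `x` to `y`. -/
noncomputable def tailedFCount (n k : ℕ) (x y : V) : ℕ :=
  Nat.card {p : ℕ → V // R.IsForwardPath n k x (p (2*k)) p ∧ R.G.Adj (p (2*k)) y}

/-- Number of headed-k-forward paths from `x` to `y`. -/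
noncomputable def headedFCount (n k : ℕ) (x y : V) : ℕ :=
  Nat.card {p : ℕ → V // R.G.Adj x (p 0) ∧ R.IsForwardPath n k (p 0) y p}

/-- Number of tailed-k-backward paths from `x` to `y`. -/
noncomputable def tailedBCount (n k : ℕ) (x y : V) : ℕ :=
  Nat.card {p : ℕ → V // R.IsBackwardPath n k x (p (2*k)) p ∧ R.G.Adj (p (2*k)) y}

/-- Number of headed-k-backward paths from `x` to `y`. -/
noncomputable def headedBCount (n k : ℕ) (x y : V) : ℕ :=
  Nat.card {p : ℕ → V // R.G.Adj x (p 0) ∧ R.IsBackwardPath n k (p 0) y p}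

/-- Path commuting rooted graph. -/
def PathCommuting : Prop :=
  ∀ n : ℕ, ∀ x ∈ R.sphere n, ∀ y ∈ R.sphere n, ∀ k l : ℕ,
    R.fbCount n k l x y = R.bfCount n l k x y ∧
    R.tailedFCount n k x y = R.headedFCount n k x y ∧
    R.tailedBCount n k x y = R.headedBCount n k x y

/-- Family preserving rooted graph. -/
def FamilyPreserving : Prop :=
  (∀ n : ℕ, ∀ x ∈ R.sphere n, ∀ y ∈ R.sphere n, ∀ z ∈ R.sphere (n+1),
    R.G.Adj x z → R.G.Adj y z →
    ∃ τ : R.G ≃g R.G, τ R.o = R.o ∧ τ x = y ∧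
      ∀ j : ℕ, 1 ≤ j → ∀ v ∈ R.sphere (n+j), τ v = v) ∧
  (∀ n : ℕ, 1 ≤ n → ∀ x ∈ R.sphere n, ∀ y ∈ R.sphere n, ∀ z ∈ R.sphere (n-1),
    R.G.Adj x z → R.G.Adj y z →
    ∃ τ : R.G ≃g R.G, τ R.o = R.o ∧ τ x = y ∧
      ∀ j : ℕ, 1 ≤ j → j ≤ n → ∀ v ∈ R.sphere (n-j), τ v = v) ∧
  (∀ n : ℕ, ∀ x ∈ R.sphere n, ∀ y ∈ R.sphere n, R.G.Adj x y →
    ∃ γ : R.G ≃g R.G, γ R.o = R.o ∧ γ x = y ∧ γ y = x)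

/-- The 0-1 edge matrix between spheres `j` and `j+1`. -/
noncomputable def Esub (j : ℕ) : Matrix ↥(R.sphere (j+1)) ↥(R.sphere j) ℕ :=
  fun u v => if R.G.Adj u.1 v.1 then 1 else 0

/-- The adjacency matrix of the subgraph induced on sphere `n`. -/
noncomputable def Vsub (n : ℕ) : Matrix ↥(R.sphere n) ↥(R.sphere n) ℕ :=
  fun u v => if R.G.Adj u.1 v.1 then 1 else 0

/-- The product `E_{m+l-1} ⋯ E_{m+1} E_m` of edge matrices (identity for `l = 0`). -/
noncomputable def chainProd (m : ℕ) : (l : ℕ) → Matrix ↥(R.sphere (m + l)) ↥(R.sphere m) ℕ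
  | 0 => (1 : Matrix ↥(R.sphere m) ↥(R.sphere m) ℕ)
  | l+1 => R.Esub (m+l) * chainProd m l

/-- `Λ_{n,+k} = E_n^T ⋯ E_{n+k-1}^T E_{n+k-1} ⋯ E_n`, which counts `k`-forward paths. -/
noncomputable def lamPlus (n k : ℕ) : Matrix ↥(R.sphere n) ↥(R.sphere n) ℕ :=
  (R.chainProd n k)ᵀ * R.chainProd n k

/-- `Λ_{m+l,-l} = E_{m+l-1} ⋯ E_m E_m^T ⋯ E_{m+l-1}^T`, which counts `l`-backward paths. -/
noncomputable def lamMinus (m l : ℕ) : Matrix ↥(R.sphere (m + l)) ↥(R.sphere (m + l)) ℕ :=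
  R.chainProd m l * (R.chainProd m l)ᵀ

/-- `Λ_{n,-j}`, defined as the identity when `j > n`. -/
noncomputable def lamMinusAll : (n j : ℕ) → Matrix ↥(R.sphere n) ↥(R.sphere n) ℕ
  | _, 0 => 1
  | 0, _+1 => 1
  | n+1, j+1 => if j + 1 ≤ n + 1 then R.Esub n * lamMinusAll n j * (R.Esub n)ᵀ else 1

/-- The graph Laplacian acting on real-valued functions. -/
noncomputable def lap (φ : V → ℝ) (x : V) : ℝ :=
  ∑ᶠ y ∈ R.G.neighborSet x, (φ x - φ y)

/-- An antitree: two vertices are adjacent iff their distances to the root differ by one. -/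
def IsAntitree : Prop :=
  ∀ x y : V, R.G.Adj x y ↔
    (R.G.dist R.o x + 1 = R.G.dist R.o y ∨ R.G.dist R.o y + 1 = R.G.dist R.o x)

/-- The set `Z^{k,ℓ}_{x,y}` of vertices in sphere `n` reachable from `x` by a `k`-forward
path and from `y` by an `ℓ`-backward path. -/
def Zset (n k l : ℕ) (x y : V) : Set V :=
  {z | z ∈ R.sphere n ∧ (∃ p, R.IsForwardPath n k x z p) ∧ (∃ q, R.IsBackwardPath n l y z q)}

end RootedGraph
section Helpers

/-- flat subtype of product ≃ sigma of subtypes -/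
def sigmaSubtypeEquiv {I T : Type*} (Q : I → T → Prop) :
    {it : I × T // Q it.1 it.2} ≃ Σ i : I, {t // Q i t} where
  toFun x := ⟨x.1.1, ⟨x.1.2, x.2⟩⟩
  invFun x := ⟨(x.1, x.2.1), x.2.2⟩
  left_inv x := rfl
  right_inv x := rfl

lemma card_fiber_sum {I : Type*} [Fintype I] {T : Type*} (Q : I → T → Prop)
    (hfin : ∀ i, Finite {t // Q i t}) :
    Nat.card {it : I × T // Q it.1 it.2} = ∑ i : I, Nat.card {t // Q i t} := by
  rw [Nat.card_congr (sigmaSubtypeEquiv Q)]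
  haveI := hfin
  haveI : ∀ i : I, Fintype {t // Q i t} := fun i => Fintype.ofFinite _
  rw [Nat.card_eq_fintype_card, Fintype.card_sigma]
  exact Finset.sum_congr rfl fun i _ => (Nat.card_eq_fintype_card).symm

lemma sum_ite_eq_subtype {I : Type*} [Fintype I] (C : I → Prop) [DecidablePred C] (f : I → ℕ) :
    (∑ i : I, if C i then f i else 0) = ∑ i : {i // C i}, f i.1 := by
  rw [← Finset.sum_filter]
  exact Finset.sum_subtype _ (by simp) f

/-- Functions determined by finitely many values in finite sets form a finite type. -/
lemma finite_subtype_paths {V : Type*} {L : ℕ} {P : (ℕ → V) → Prop} (T : ℕ → Set V)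
    (hT : ∀ j, j ≤ L → (T j).Finite)
    (h : ∀ p, P p → (∀ j, j ≤ L → p j ∈ T j) ∧ (∀ j, L ≤ j → p j = p L)) :
    Finite {p : ℕ → V // P p} := by
  haveI : ∀ j : Fin (L+1), Finite ↥(T j.1) := fun j => (hT j.1 (by omega)).to_subtype
  apply Finite.of_injective
    (f := fun q : {p // P p} => (fun j : Fin (L+1) => (⟨q.1 j.1, (h q.1 q.2).1 j.1 (by omega)⟩ : ↥(T j.1))))
  intro q q' hqq'
  apply Subtype.ext
  funext j
  by_cases hj : j ≤ L
  · exact congrArg Subtype.val (congrFun hqq' ⟨j, by omega⟩)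
  · have h1 := (h q.1 q.2).2 j (by omega)
    have h2 := (h q'.1 q'.2).2 j (by omega)
    have hL : q.1 L = q'.1 L := congrArg Subtype.val (congrFun hqq' ⟨L, by omega⟩)
    rw [h1, h2, hL]


def subtypeAssocEquiv {A T : Type*} {C : A → Prop} {Q : A → T → Prop} :
    {it : {a // C a} × T // Q it.1.1 it.2} ≃ {at' : A × T // C at'.1 ∧ Q at'.1 at'.2} where
  toFun x := ⟨(x.1.1.1, x.1.2), x.1.1.2, x.2⟩
  invFun x := ⟨(⟨x.1.1, x.2.1⟩, x.1.2), x.2.2⟩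
  left_inv _ := rfl
  right_inv _ := rfl


lemma sum_sum_ite_card {I₁ I₂ : Type*} [Fintype I₁] [Fintype I₂] {T : Type*}
    (C : I₁ → I₂ → Prop) [∀ i j, Decidable (C i j)] (Q : I₁ → I₂ → T → Prop)
    (hfin : ∀ i j, Finite {t // Q i j t}) :
    (∑ i : I₁, ∑ j : I₂, if C i j then Nat.card {t // Q i j t} else 0)
    = Nat.card {x : {ij : I₁ × I₂ // C ij.1 ij.2} × T // Q x.1.1.1 x.1.1.2 x.2} := by
  have h1 : (∑ ij : I₁ × I₂, if C ij.1 ij.2 then Nat.card {t // Q ij.1 ij.2 t} else 0)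
      = ∑ i : I₁, ∑ j : I₂, if C i j then Nat.card {t // Q i j t} else 0 :=
    Fintype.sum_prod_type _
  rw [← h1, sum_ite_eq_subtype (fun ij : I₁ × I₂ => C ij.1 ij.2)
    (fun ij => Nat.card {t // Q ij.1 ij.2 t})]
  exact (card_fiber_sum (fun (i : {ij : I₁ × I₂ // C ij.1 ij.2}) (t : T) => Q i.1.1 i.1.2 t)
    (fun i => hfin i.1.1 i.1.2)).symm

end Helpers
namespace RootedGraph

variable {V : Type*} (R : RootedGraph V)

/-- An ascending path of length `l` from `a ∈ S_n` to `b ∈ S_{n+l}`. -/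
def IsAsc (n l : ℕ) (a b : V) (p : ℕ → V) : Prop :=
  p 0 = a ∧ (∀ j, l ≤ j → p j = b) ∧ (∀ j, j < l → R.G.Adj (p j) (p (j+1))) ∧
  (∀ j, j ≤ l → p j ∈ R.sphere (n + j))

variable {R}

lemma finite_asc (n l : ℕ) (a b : V) : Finite {p : ℕ → V // R.IsAsc n l a b p} := by
  apply finite_subtype_paths (L := l) (T := fun j => R.sphere (n + j))
    (fun j _ => R.sphereFin _)
  intro p hp
  refine ⟨hp.2.2.2, fun j hj => ?_⟩
  rw [hp.2.1 j hj, hp.2.1 l le_rfl]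

lemma finite_fwd (n k : ℕ) (a b : V) : Finite {p : ℕ → V // R.IsForwardPath n k a b p} := by
  apply finite_subtype_paths (L := 2*k)
    (T := fun j => R.sphere (n + j) ∪ R.sphere (n + (2*k - j)))
    (fun j _ => (R.sphereFin _).union (R.sphereFin _))
  intro p hp
  constructor
  · intro j hj
    rcases le_or_gt j k with h | h
    · exact Or.inl (hp.2.2.2.1 j h)
    · exact Or.inr (hp.2.2.2.2 j h.le hj)
  · intro j hj
    rw [hp.2.1 j hj, hp.2.1 (2*k) le_rfl]

lemma finite_bwd (n k : ℕ) (a b : V) : Finite {p : ℕ → V // R.IsBackwardPath n k a b p} := by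
  apply finite_subtype_paths (L := 2*k)
    (T := fun j => R.sphere (n - j) ∪ R.sphere (n - (2*k - j)))
    (fun j _ => (R.sphereFin _).union (R.sphereFin _))
  intro p hp
  constructor
  · intro j hj
    rcases le_or_gt j k with h | h
    · exact Or.inl (hp.2.2.2.2.1 j h)
    · exact Or.inr (hp.2.2.2.2.2 j h.le hj)
  · intro j hj
    rw [hp.2.2.1 j hj, hp.2.2.1 (2*k) le_rfl]

lemma fwd_mid_mem {n k : ℕ} {x y : V} {p : ℕ → V} (h : R.IsForwardPath n k x y p) :
    p (2*k) ∈ R.sphere n := by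
  have := h.2.2.2.2 (2*k) (by omega) le_rfl
  simpa using this

lemma fwd_end {n k : ℕ} {x y : V} {p : ℕ → V} (h : R.IsForwardPath n k x y p) :
    p (2*k) = y := h.2.1 (2*k) le_rfl

lemma fwd_start {n k : ℕ} {x y : V} {p : ℕ → V} (h : R.IsForwardPath n k x y p) :
    p 0 = x := h.1

lemma fwd_start_mem {n k : ℕ} {x y : V} {p : ℕ → V} (h : R.IsForwardPath n k x y p) :
    p 0 ∈ R.sphere n := by
  have := h.2.2.2.1 0 (by omega)
  simpa using this

lemma fwd_congr_end {n k : ℕ} {x z : V} {p : ℕ → V} (h : R.IsForwardPath n k x z p) :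
    R.IsForwardPath n k x (p (2*k)) p := by rwa [fwd_end h]

lemma bwd_mid_mem {n k : ℕ} {x y : V} {q : ℕ → V} (h : R.IsBackwardPath n k x y q) :
    q (2*k) ∈ R.sphere n := by
  have := h.2.2.2.2.2 (2*k) (by omega) le_rfl
  simpa using this

lemma bwd_end {n k : ℕ} {x y : V} {q : ℕ → V} (h : R.IsBackwardPath n k x y q) :
    q (2*k) = y := h.2.2.1 (2*k) le_rfl

lemma bwd_start {n k : ℕ} {x y : V} {q : ℕ → V} (h : R.IsBackwardPath n k x y q) :
    q 0 = x := h.2.1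

lemma bwd_start_mem {n k : ℕ} {x y : V} {q : ℕ → V} (h : R.IsBackwardPath n k x y q) :
    q 0 ∈ R.sphere n := by
  have := h.2.2.2.2.1 0 (by omega)
  simpa using this

lemma bwd_congr_end {n k : ℕ} {x z : V} {q : ℕ → V} (h : R.IsBackwardPath n k x z q) :
    R.IsBackwardPath n k x (q (2*k)) q := by rwa [bwd_end h]



/-- Splitting off the last edge of an ascending path. -/
def ascSplitEquiv (n l : ℕ) (a b : V) (hb : b ∈ R.sphere (n + (l+1))) :
    {p : ℕ → V // R.IsAsc n (l+1) a b p} ≃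
    {wq : ↥(R.sphere (n+l)) × (ℕ → V) // R.G.Adj b wq.1.1 ∧ R.IsAsc n l a wq.1.1 wq.2} where
  toFun p := ⟨(⟨p.1 l, p.2.2.2.2 l (by omega)⟩, fun j => p.1 (min j l)), by
    obtain ⟨h1, h2, h3, h4⟩ := p.2
    dsimp only
    refine ⟨?_, ?_, ?_, ?_, ?_⟩
    · have hadj := h3 l (by omega)
      rw [h2 (l+1) le_rfl] at hadj
      exact hadj.symm
    · simpa using h1
    · intro j hj
      simp only [min_eq_right hj]
    · intro j hj
      have e1 : min j l = j := min_eq_left hj.le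
      have e2 : min (j+1) l = j + 1 := min_eq_left (by omega)
      simp only [e1, e2]
      exact h3 j (by omega)
    · intro j hj
      simp only [min_eq_left hj]
      exact h4 j (by omega)⟩
  invFun wq := ⟨fun j => if j ≤ l then wq.1.2 j else b, by
    obtain ⟨hadj, h1, h2, h3, h4⟩ := wq.2
    refine ⟨by simpa using h1, ?_, ?_, ?_⟩
    · intro j hj
      simp only [if_neg (show ¬ j ≤ l by omega)]
    · intro j hj
      rcases lt_or_ge j l with h | h
      · simp only [if_pos (show j ≤ l by omega), if_pos (show j + 1 ≤ l by omega)]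
        exact h3 j h
      · have hjl : j = l := by omega
        subst hjl
        simp only [if_pos le_rfl, if_neg (show ¬ j + 1 ≤ j by omega), h2 j le_rfl]
        exact hadj.symm
    · intro j hj
      rcases le_or_gt j l with h | h
      · simp only [if_pos h]
        exact h4 j h
      · have hjl : j = l + 1 := by omega
        subst hjl
        simp only [if_neg (show ¬ l + 1 ≤ l by omega)]
        exact hb⟩
  left_inv p := by
    apply Subtype.ext
    funext j
    dsimp only
    by_cases hj : j ≤ l
    · simp [hj, min_eq_left hj]
    · simp only [if_neg hj]
      exact (p.2.2.1 j (by omega)).symm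
  right_inv wq := by
    obtain ⟨hadj, h1, h2, h3, h4⟩ := wq.2
    apply Subtype.ext
    apply Prod.ext
    · apply Subtype.ext
      dsimp only
      rw [if_pos le_rfl, h2 l le_rfl]
    · funext j
      dsimp only
      rw [if_pos (min_le_right j l)]
      rcases le_or_gt j l with h | h
      · rw [min_eq_left h]
      · rw [min_eq_right h.le, h2 l le_rfl, h2 j h.le]

lemma chainProd_apply (n : ℕ) : ∀ (l : ℕ) (u : ↥(R.sphere (n+l))) (v : ↥(R.sphere n)),
    R.chainProd n l u v = Nat.card {p : ℕ → V // R.IsAsc n l v.1 u.1 p} := by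
  intro l
  induction l with
  | zero =>
    intro u v
    have : R.chainProd n 0 u v = (1 : Matrix ↥(R.sphere n) ↥(R.sphere n) ℕ) u v := rfl
    rw [this, Matrix.one_apply]
    by_cases h : u = v
    · rw [if_pos h]
      subst h
      haveI : Nonempty {p : ℕ → V // R.IsAsc n 0 u.1 u.1 p} :=
        ⟨⟨fun _ => u.1, rfl, fun _ _ => rfl, fun j hj => by omega, fun j hj => by
          have : j = 0 := by omega
          subst this
          simpa using u.2⟩⟩
      haveI : Subsingleton {p : ℕ → V // R.IsAsc n 0 u.1 u.1 p} := by
        constructor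
        intro p q
        apply Subtype.ext
        funext j
        rw [p.2.2.1 j (by omega), q.2.2.1 j (by omega)]
      exact (Nat.card_unique).symm
    · rw [if_neg h]
      haveI : IsEmpty {p : ℕ → V // R.IsAsc n 0 v.1 u.1 p} := by
        constructor
        intro p
        apply h
        apply Subtype.ext
        rw [← p.2.2.1 0 le_rfl, p.2.1]
      exact (Nat.card_of_isEmpty).symm
  | succ l ih =>
    intro u v
    have hstep : R.chainProd n (l+1) u v
        = ∑ w : ↥(R.sphere (n+l)), R.Esub (n+l) u w * R.chainProd n l w v :=
      Matrix.mul_apply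
    rw [hstep]
    have : ∀ w : ↥(R.sphere (n+l)), R.Esub (n+l) u w * R.chainProd n l w v
        = if R.G.Adj u.1 w.1 then Nat.card {p : ℕ → V // R.IsAsc n l v.1 w.1 p} else 0 := by
      intro w
      rw [ih w v, Esub]
      by_cases h : R.G.Adj u.1 w.1 <;> simp [h]
    rw [Finset.sum_congr rfl fun w _ => this w, sum_ite_eq_subtype]
    haveI : ∀ i : {w : ↥(R.sphere (n+l)) // R.G.Adj u.1 w.1},
        Finite {p : ℕ → V // R.IsAsc n l v.1 i.1.1 p} := fun i => finite_asc n l v.1 i.1.1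
    rw [← card_fiber_sum (fun (i : {w : ↥(R.sphere (n+l)) // R.G.Adj u.1 w.1}) (p : ℕ → V) =>
      R.IsAsc n l v.1 i.1.1 p) (fun i => finite_asc n l v.1 i.1.1)]
    apply Nat.card_congr
    exact (subtypeAssocEquiv (C := fun w : ↥(R.sphere (n+l)) => R.G.Adj u.1 w.1)
      (Q := fun w p => R.IsAsc n l v.1 w.1 p)).trans (ascSplitEquiv n l v.1 u.1 u.2).symm

/-- Splitting a forward path at its apex into two ascending paths. -/
def fwdSplitEquiv (n k : ℕ) (x y : V) :
    {p : ℕ → V // R.IsForwardPath n k x y p} ≃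
    {w : ↥(R.sphere (n+k)) × ((ℕ → V) × (ℕ → V)) //
      R.IsAsc n k x w.1.1 w.2.1 ∧ R.IsAsc n k y w.1.1 w.2.2} where
  toFun p := ⟨(⟨p.1 k, p.2.2.2.2.1 k le_rfl⟩,
      (fun j => p.1 (min j k), fun j => p.1 (2*k - min j k))), by
    obtain ⟨h1, h2, h3, h4, h5⟩ := p.2
    refine ⟨⟨?_, ?_, ?_, ?_⟩, ?_, ?_, ?_, ?_⟩
    · simp only [min_eq_left (Nat.zero_le k)]
      exact h1
    · intro j hj
      simp only [min_eq_right hj]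
    · intro j hj
      simp only [min_eq_left hj.le, min_eq_left (show j+1 ≤ k by omega)]
      exact h3 j (by omega)
    · intro j hj
      simp only [min_eq_left hj]
      exact h4 j hj
    · simp only [min_eq_left (Nat.zero_le k), Nat.sub_zero]
      exact h2 (2*k) le_rfl
    · intro j hj
      simp only [min_eq_right hj, show 2*k - k = k by omega]
    · intro j hj
      simp only [min_eq_left hj.le, min_eq_left (show j+1 ≤ k by omega)]
      have h := h3 (2*k - (j+1)) (by omega)
      rw [show 2*k - (j+1) + 1 = 2*k - j by omega] at h
      exact h.symm
    · intro j hj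
      simp only [min_eq_left hj]
      have h := h5 (2*k - j) (by omega) (by omega)
      rwa [show 2*k - (2*k - j) = j by omega] at h⟩
  invFun w := ⟨fun j => if j ≤ k then w.1.2.1 j else w.1.2.2 (2*k - j), by
    obtain ⟨⟨p10, p1e, p1adj, p1s⟩, ⟨p20, p2e, p2adj, p2s⟩⟩ := w.2
    refine ⟨?_, ?_, ?_, ?_, ?_⟩
    · simp only [if_pos (Nat.zero_le k)]
      exact p10
    · intro j hj
      by_cases h : j ≤ k
      · simp only [if_pos h]
        rw [p1e j (by omega), ← p2e 0 (by omega)]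
        exact p20
      · simp only [if_neg h, show 2*k - j = 0 by omega]
        exact p20
    · intro j hj
      rcases lt_or_ge (j+1) (k+1) with h | h
      · simp only [if_pos (show j ≤ k by omega), if_pos (show j+1 ≤ k by omega)]
        exact p1adj j (by omega)
      · rcases eq_or_lt_of_le h with h' | h'
        · have hjk : j = k := by omega
          simp only [if_pos (show j ≤ k by omega), if_neg (show ¬ j + 1 ≤ k by omega)]
          have h2 := p2adj (k-1) (by omega)
          rw [show k - 1 + 1 = k by omega, p2e k le_rfl] at h2
          rw [p1e j (by omega), show 2*k - (j+1) = k - 1 by omega]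
          exact h2.symm
        · simp only [if_neg (show ¬ j ≤ k by omega), if_neg (show ¬ j + 1 ≤ k by omega)]
          have h2 := p2adj (2*k - (j+1)) (by omega)
          rw [show 2*k - (j+1) + 1 = 2*k - j by omega] at h2
          exact h2.symm
    · intro j hj
      simp only [if_pos hj]
      exact p1s j hj
    · intro j hj hj2
      by_cases h : j ≤ k
      · have hjk : j = k := by omega
        simp only [if_pos h, show 2*k - j = j by omega]
        exact p1s j h
      · simp only [if_neg h, show 2*k - (2*k - j) = j by omega]
        exact p2s (2*k - j) (by omega)⟩
  left_inv p := by
    obtain ⟨h1, h2, h3, h4, h5⟩ := p.2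
    apply Subtype.ext
    funext j
    dsimp only
    by_cases hj : j ≤ k
    · simp only [if_pos hj, min_eq_left hj]
    · simp only [if_neg hj]
      rcases le_or_gt j (2*k) with h | h
      · rw [min_eq_left (show 2*k - j ≤ k by omega), show 2*k - (2*k - j) = j by omega]
      · rw [show 2*k - j = 0 by omega, min_eq_left (Nat.zero_le k), Nat.sub_zero,
          h2 (2*k) le_rfl, h2 j (by omega)]
  right_inv w := by
    obtain ⟨⟨p10, p1e, p1adj, p1s⟩, ⟨p20, p2e, p2adj, p2s⟩⟩ := w.2
    apply Subtype.ext
    apply Prod.ext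
    · apply Subtype.ext
      dsimp only
      rw [if_pos le_rfl]
      exact p1e k le_rfl
    · apply Prod.ext
      · funext j
        dsimp only
        rw [if_pos (min_le_right j k)]
        rcases le_or_gt j k with h | h
        · rw [min_eq_left h]
        · rw [min_eq_right h.le, p1e k le_rfl, p1e j h.le]
      · funext j
        dsimp only
        rcases lt_or_ge j k with h | h
        · rw [min_eq_left h.le, if_neg (show ¬ 2*k - j ≤ k by omega),
            show 2*k - (2*k - j) = j by omega]
        · rw [min_eq_right h, show 2*k - k = k by omega, if_pos le_rfl,
            p1e k le_rfl, p2e j h]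

lemma lamPlus_apply (n k : ℕ) (x y : ↥(R.sphere n)) :
    R.lamPlus n k x y = Nat.card {p : ℕ → V // R.IsForwardPath n k x.1 y.1 p} := by
  rw [lamPlus, Matrix.mul_apply]
  have step1 : ∀ u : ↥(R.sphere (n+k)),
      (R.chainProd n k)ᵀ x u * R.chainProd n k u y
      = Nat.card {pq : (ℕ → V) × (ℕ → V) //
          R.IsAsc n k x.1 u.1 pq.1 ∧ R.IsAsc n k y.1 u.1 pq.2} := by
    intro u
    rw [Matrix.transpose_apply, chainProd_apply, chainProd_apply, ← Nat.card_prod]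
    exact (Nat.card_congr (Equiv.subtypeProdEquivProd)).symm
  rw [Finset.sum_congr rfl fun u _ => step1 u]
  haveI : ∀ u : ↥(R.sphere (n+k)), Finite {pq : (ℕ → V) × (ℕ → V) //
      R.IsAsc n k x.1 u.1 pq.1 ∧ R.IsAsc n k y.1 u.1 pq.2} := by
    intro u
    haveI := finite_asc (R := R) n k x.1 u.1
    haveI := finite_asc (R := R) n k y.1 u.1
    exact Finite.of_equiv _ (Equiv.subtypeProdEquivProd).symm
  rw [← card_fiber_sum (fun (u : ↥(R.sphere (n+k))) (pq : (ℕ → V) × (ℕ → V)) =>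
    R.IsAsc n k x.1 u.1 pq.1 ∧ R.IsAsc n k y.1 u.1 pq.2) (fun u => by infer_instance)]
  exact (Nat.card_congr (fwdSplitEquiv n k x.1 y.1)).symm

lemma lamMinusAll_zero (n : ℕ) : R.lamMinusAll n 0 = 1 := by
  cases n <;> rfl

lemma lamMinusAll_of_gt : ∀ n l : ℕ, n < l → R.lamMinusAll n l = 1
  | _, 0, h => by omega
  | 0, l+1, _ => rfl
  | n+1, l+1, h => by rw [lamMinusAll, if_neg (by omega)]

lemma lamMinusAll_succ (m l : ℕ) (h : l ≤ m) :
    R.lamMinusAll (m+1) (l+1) = R.Esub m * R.lamMinusAll m l * (R.Esub m)ᵀ := by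
  rw [lamMinusAll, if_pos (by omega)]

set_option maxHeartbeats 1000000 in
/-- Stripping the first and last edges off a backward path. -/
def bwdStripEquiv (m l : ℕ) (z y : V) (hz : z ∈ R.sphere (m+1)) (hy : y ∈ R.sphere (m+1))
    (hl : l ≤ m) :
    {q : ℕ → V // R.IsBackwardPath (m+1) (l+1) z y q} ≃
    {it : {ww : ↥(R.sphere m) × ↥(R.sphere m) // R.G.Adj z ww.1.1 ∧ R.G.Adj y ww.2.1} × (ℕ → V) //
      R.IsBackwardPath m l it.1.1.1.1 it.1.1.2.1 it.2} where
  toFun q := ⟨((⟨(⟨q.1 1, by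
        obtain ⟨hk, h1, h2, h3, h4, h5⟩ := q.2
        have := h4 1 (by omega)
        rwa [show m + 1 - 1 = m by omega] at this⟩,
      ⟨q.1 (2*l+1), by
        obtain ⟨hk, h1, h2, h3, h4, h5⟩ := q.2
        have := h5 (2*l+1) (by omega) (by omega)
        rwa [show m + 1 - (2*(l+1) - (2*l+1)) = m by omega] at this⟩), by
        obtain ⟨hk, h1, h2, h3, h4, h5⟩ := q.2
        constructor
        · have := h3 0 (by omega)
          rwa [h1] at this
        · have hadj := h3 (2*l+1) (by omega)
          rw [h2 (2*l+1+1) (by omega)] at hadj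
          exact hadj.symm⟩),
      fun j => q.1 (min (j+1) (2*l+1))), by
    obtain ⟨hk, h1, h2, h3, h4, h5⟩ := q.2
    refine ⟨hl, ?_, ?_, ?_, ?_, ?_⟩
    · dsimp only
      simp only [min_eq_left (show 0+1 ≤ 2*l+1 by omega)]
    · intro j hj
      dsimp only
      simp only [min_eq_right (show 2*l+1 ≤ j+1 by omega)]
    · intro j hj
      dsimp only
      simp only [min_eq_left (show j+1 ≤ 2*l+1 by omega),
        min_eq_left (show j+1+1 ≤ 2*l+1 by omega)]
      exact h3 (j+1) (by omega)
    · intro j hj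
      dsimp only
      simp only [min_eq_left (show j+1 ≤ 2*l+1 by omega)]
      have := h4 (j+1) (by omega)
      rwa [show m + 1 - (j+1) = m - j by omega] at this
    · intro j hj hj2
      dsimp only
      simp only [min_eq_left (show j+1 ≤ 2*l+1 by omega)]
      have := h5 (j+1) (by omega) (by omega)
      rwa [show m + 1 - (2*(l+1) - (j+1)) = m - (2*l - j) by omega] at this⟩
  invFun it := ⟨fun j => if j = 0 then z else if j ≤ 2*l+1 then it.1.2 (j-1) else y, by
    obtain ⟨rk, r1, r2, r3, r4, r5⟩ := it.2
    have hadj1 : R.G.Adj z it.1.1.1.1.1 := it.1.1.2.1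
    have hadj2 : R.G.Adj y it.1.1.1.2.1 := it.1.1.2.2
    refine ⟨by omega, by simp, ?_, ?_, ?_, ?_⟩
    · intro j hj
      dsimp only
      rw [if_neg (by omega), if_neg (by omega)]
    · intro j hj
      dsimp only
      rcases Nat.eq_zero_or_pos j with h0 | h0
      · subst h0
        rw [if_pos rfl, if_neg (by omega), if_pos (by omega)]
        rwa [show 0 + 1 - 1 = 0 by omega, r1]
      rcases lt_or_ge j (2*l+1) with hlt | hge
      · rw [if_neg (show ¬ j = 0 by omega), if_pos (show j ≤ 2*l+1 by omega),
          if_neg (show ¬ j + 1 = 0 by omega), if_pos (show j + 1 ≤ 2*l+1 by omega)]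
        have := r3 (j-1) (by omega)
        rw [show j - 1 + 1 = j by omega] at this
        rwa [show j + 1 - 1 = j by omega]
      · have hj' : j = 2*l+1 := by omega
        subst hj'
        rw [if_neg (show ¬ 2*l+1 = 0 by omega), if_pos (le_refl (2*l+1)),
          if_neg (show ¬ 2*l+1+1 = 0 by omega), if_neg (show ¬ 2*l+1+1 ≤ 2*l+1 by omega)]
        have hw' := r2 (2*l) le_rfl
        rw [show 2*l+1 - 1 = 2*l by omega, hw']
        exact hadj2.symm
    · intro j hj
      dsimp only
      rcases Nat.eq_zero_or_pos j with h0 | h0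
      · subst h0
        rw [if_pos rfl]
        simpa using hz
      · rw [if_neg (by omega), if_pos (by omega)]
        have := r4 (j-1) (by omega)
        rwa [show m - (j-1) = m + 1 - j by omega] at this
    · intro j hj hj2
      dsimp only
      rcases le_or_gt j (2*l+1) with hle | hgt
      · rw [if_neg (by omega), if_pos hle]
        have := r5 (j-1) (by omega) (by omega)
        rwa [show m - (2*l - (j-1)) = m + 1 - (2*(l+1) - j) by omega] at this
      · have hj' : j = 2*l+2 := by omega
        subst hj'
        rw [if_neg (by omega), if_neg (by omega)]
        rwa [show m + 1 - (2*(l+1) - (2*l+2)) = m + 1 by omega]⟩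
  left_inv q := by
    obtain ⟨hk, h1, h2, h3, h4, h5⟩ := q.2
    apply Subtype.ext
    funext j
    dsimp only
    rcases Nat.eq_zero_or_pos j with h0 | h0
    · subst h0
      rw [if_pos rfl, h1]
    rcases le_or_gt j (2*l+1) with hle | hgt
    · rw [if_neg (by omega), if_pos hle,
        min_eq_left (show j - 1 + 1 ≤ 2*l+1 by omega), show j - 1 + 1 = j by omega]
    · rw [if_neg (by omega), if_neg (by omega), h2 j (by omega)]
  right_inv it := by
    have r1 : it.1.2 0 = it.1.1.1.1.1 := it.2.2.1
    have r2 : ∀ j, 2*l ≤ j → it.1.2 j = it.1.1.1.2.1 := it.2.2.2.1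
    apply Subtype.ext
    apply Prod.ext
    · apply Subtype.ext
      apply Prod.ext
      · apply Subtype.ext
        show (if (1:ℕ) = 0 then z else if 1 ≤ 2*l+1 then it.1.2 (1-1) else y) = _
        rw [if_neg (by omega), if_pos (by omega), show (1:ℕ)-1 = 0 by omega]
        exact r1
      · apply Subtype.ext
        show (if (2*l+1:ℕ) = 0 then z else if 2*l+1 ≤ 2*l+1 then it.1.2 (2*l+1-1) else y) = _
        rw [if_neg (by omega), if_pos le_rfl, show 2*l+1-1 = 2*l by omega]
        exact r2 (2*l) le_rfl
    · funext j
      show (if min (j+1) (2*l+1) = 0 then z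
        else if min (j+1) (2*l+1) ≤ 2*l+1 then it.1.2 (min (j+1) (2*l+1) - 1) else y) = it.1.2 j
      rw [if_neg (by omega), if_pos (min_le_right _ _)]
      rcases le_or_gt (j+1) (2*l+1) with hle | hgt
      · rw [min_eq_left hle, Nat.add_sub_cancel]
      · rw [min_eq_right (by omega), show 2*l+1-1 = 2*l by omega,
          r2 (2*l) le_rfl, r2 j (by omega)]

lemma lamMinusAll_apply : ∀ (l n : ℕ), l ≤ n → ∀ (z y : ↥(R.sphere n)),
    R.lamMinusAll n l z y = Nat.card {q : ℕ → V // R.IsBackwardPath n l z.1 y.1 q} := by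
  intro l
  induction l with
  | zero =>
    intro n _ z y
    rw [lamMinusAll_zero, Matrix.one_apply]
    by_cases h : z = y
    · rw [if_pos h]
      subst h
      haveI : Nonempty {q : ℕ → V // R.IsBackwardPath n 0 z.1 z.1 q} :=
        ⟨⟨fun _ => z.1, by omega, rfl, fun _ _ => rfl, fun j hj => by omega,
          fun j hj => by
            have : j = 0 := by omega
            subst this
            simpa using z.2,
          fun j hj hj2 => by
            have : j = 0 := by omega
            subst this
            simpa using z.2⟩⟩
      haveI : Subsingleton {q : ℕ → V // R.IsBackwardPath n 0 z.1 z.1 q} := by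
        constructor
        intro p q
        apply Subtype.ext
        funext j
        rw [p.2.2.2.1 j (by omega), q.2.2.2.1 j (by omega)]
      exact (Nat.card_unique).symm
    · rw [if_neg h]
      haveI : IsEmpty {q : ℕ → V // R.IsBackwardPath n 0 z.1 y.1 q} := by
        constructor
        intro q
        apply h
        apply Subtype.ext
        exact q.2.2.1.symm.trans (q.2.2.2.1 0 (by omega))
      exact (Nat.card_of_isEmpty).symm
  | succ l ih =>
    intro n hn z y
    obtain ⟨m, rfl⟩ : ∃ m, n = m + 1 := ⟨n - 1, by omega⟩
    have hl : l ≤ m := by omega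
    rw [lamMinusAll_succ m l hl]
    have e1 : (R.Esub m * R.lamMinusAll m l * (R.Esub m)ᵀ) z y
        = ∑ w : ↥(R.sphere m), ∑ w' : ↥(R.sphere m),
          R.Esub m z w * R.lamMinusAll m l w w' * R.Esub m y w' := by
      calc (R.Esub m * R.lamMinusAll m l * (R.Esub m)ᵀ) z y
          = ∑ w' : ↥(R.sphere m), (∑ w : ↥(R.sphere m),
              R.Esub m z w * R.lamMinusAll m l w w') * R.Esub m y w' := by
            rw [Matrix.mul_apply]
            exact Finset.sum_congr rfl fun w' _ => by
              rw [Matrix.mul_apply, Matrix.transpose_apply]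
        _ = ∑ w' : ↥(R.sphere m), ∑ w : ↥(R.sphere m),
              R.Esub m z w * R.lamMinusAll m l w w' * R.Esub m y w' :=
            Finset.sum_congr rfl fun w' _ => Finset.sum_mul _ _ _
        _ = _ := Finset.sum_comm
    have e2 : ∀ w w' : ↥(R.sphere m), R.Esub m z w * R.lamMinusAll m l w w' * R.Esub m y w'
        = if R.G.Adj z.1 w.1 ∧ R.G.Adj y.1 w'.1
            then Nat.card {r : ℕ → V // R.IsBackwardPath m l w.1 w'.1 r} else 0 := by
      intro w w'
      rw [ih m hl w w']
      by_cases h1 : R.G.Adj z.1 w.1 <;> by_cases h2 : R.G.Adj y.1 w'.1 <;>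
        simp [Esub, h1, h2]
    rw [e1, Finset.sum_congr rfl fun w _ => Finset.sum_congr rfl fun w' _ => e2 w w']
    refine (sum_sum_ite_card _ _ fun w w' : ↥(R.sphere m) => finite_bwd m l w.1 w'.1).trans ?_
    exact (Nat.card_congr (bwdStripEquiv m l z.1 y.1 z.2 y.2 hl)).symm

lemma chainProd_one (n : ℕ) : R.chainProd n 1 = R.Esub n := Matrix.mul_one _

lemma lamPlus_zero (n : ℕ) : R.lamPlus n 0 = 1 := by
  ext x y
  rw [lamPlus_apply, Matrix.one_apply]
  by_cases h : x = y
  · rw [if_pos h]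
    subst h
    haveI : Nonempty {p : ℕ → V // R.IsForwardPath n 0 x.1 x.1 p} :=
      ⟨⟨fun _ => x.1, rfl, fun _ _ => rfl, fun j hj => by omega,
        fun j hj => by
          have : j = 0 := by omega
          subst this
          simpa using x.2,
        fun j hj hj2 => by
          have : j = 0 := by omega
          subst this
          simpa using x.2⟩⟩
    haveI : Subsingleton {p : ℕ → V // R.IsForwardPath n 0 x.1 x.1 p} := by
      constructor
      intro p q
      apply Subtype.ext
      funext j
      rw [p.2.2.1 j (by omega), q.2.2.1 j (by omega)]
    exact Nat.card_unique
  · rw [if_neg h]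
    haveI : IsEmpty {p : ℕ → V // R.IsForwardPath n 0 x.1 y.1 p} := by
      constructor
      intro p
      apply h
      apply Subtype.ext
      exact p.2.1.symm.trans (p.2.2.1 0 (by omega))
    exact Nat.card_of_isEmpty

lemma lamPlus_one (n : ℕ) : R.lamPlus n 1 = (R.Esub n)ᵀ * R.Esub n := by
  rw [lamPlus, chainProd_one]

lemma lamMinusAll_one (m : ℕ) : R.lamMinusAll (m+1) 1 = R.Esub m * (R.Esub m)ᵀ := by
  rw [lamMinusAll_succ m 0 (Nat.zero_le m), lamMinusAll_zero, Matrix.mul_one]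

set_option maxHeartbeats 1000000 in
/-- Stripping the first and last edges off a forward path. -/
def fwdStripBottomEquiv (n k : ℕ) (x y : V) (hx : x ∈ R.sphere n) (hy : y ∈ R.sphere n) :
    {p : ℕ → V // R.IsForwardPath n (k+1) x y p} ≃
    {it : {ww : ↥(R.sphere (n+1)) × ↥(R.sphere (n+1)) //
        R.G.Adj x ww.1.1 ∧ R.G.Adj y ww.2.1} × (ℕ → V) //
      R.IsForwardPath (n+1) k it.1.1.1.1 it.1.1.2.1 it.2} where
  toFun p := ⟨((⟨(⟨p.1 1, by
        obtain ⟨h1, h2, h3, h4, h5⟩ := p.2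
        exact h4 1 (by omega)⟩,
      ⟨p.1 (2*k+1), by
        obtain ⟨h1, h2, h3, h4, h5⟩ := p.2
        have := h5 (2*k+1) (by omega) (by omega)
        rwa [show n + (2*(k+1) - (2*k+1)) = n + 1 by omega] at this⟩), by
        obtain ⟨h1, h2, h3, h4, h5⟩ := p.2
        constructor
        · have := h3 0 (by omega)
          rwa [h1] at this
        · have hadj := h3 (2*k+1) (by omega)
          rw [h2 (2*k+1+1) (by omega)] at hadj
          exact hadj.symm⟩),
      fun j => p.1 (min (j+1) (2*k+1))), by
    obtain ⟨h1, h2, h3, h4, h5⟩ := p.2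
    refine ⟨?_, ?_, ?_, ?_, ?_⟩
    · dsimp only
      simp only [min_eq_left (show 0+1 ≤ 2*k+1 by omega)]
    · intro j hj
      dsimp only
      simp only [min_eq_right (show 2*k+1 ≤ j+1 by omega)]
    · intro j hj
      dsimp only
      simp only [min_eq_left (show j+1 ≤ 2*k+1 by omega),
        min_eq_left (show j+1+1 ≤ 2*k+1 by omega)]
      exact h3 (j+1) (by omega)
    · intro j hj
      dsimp only
      simp only [min_eq_left (show j+1 ≤ 2*k+1 by omega)]
      have := h4 (j+1) (by omega)
      rwa [show n + (j+1) = n + 1 + j by omega] at this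
    · intro j hj hj2
      dsimp only
      simp only [min_eq_left (show j+1 ≤ 2*k+1 by omega)]
      have := h5 (j+1) (by omega) (by omega)
      rwa [show n + (2*(k+1) - (j+1)) = n + 1 + (2*k - j) by omega] at this⟩
  invFun it := ⟨fun j => if j = 0 then x else if j ≤ 2*k+1 then it.1.2 (j-1) else y, by
    obtain ⟨r1, r2, r3, r4, r5⟩ := it.2
    have hadj1 : R.G.Adj x it.1.1.1.1.1 := it.1.1.2.1
    have hadj2 : R.G.Adj y it.1.1.1.2.1 := it.1.1.2.2
    refine ⟨by simp, ?_, ?_, ?_, ?_⟩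
    · intro j hj
      dsimp only
      rw [if_neg (by omega), if_neg (by omega)]
    · intro j hj
      dsimp only
      rcases Nat.eq_zero_or_pos j with h0 | h0
      · subst h0
        rw [if_pos rfl, if_neg (by omega), if_pos (by omega)]
        rwa [show 0 + 1 - 1 = 0 by omega, r1]
      rcases lt_or_ge j (2*k+1) with hlt | hge
      · rw [if_neg (show ¬ j = 0 by omega), if_pos (show j ≤ 2*k+1 by omega),
          if_neg (show ¬ j + 1 = 0 by omega), if_pos (show j + 1 ≤ 2*k+1 by omega)]
        have := r3 (j-1) (by omega)
        rw [show j - 1 + 1 = j by omega] at this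
        rwa [show j + 1 - 1 = j by omega]
      · have hj' : j = 2*k+1 := by omega
        subst hj'
        rw [if_neg (show ¬ 2*k+1 = 0 by omega), if_pos (le_refl (2*k+1)),
          if_neg (show ¬ 2*k+1+1 = 0 by omega), if_neg (show ¬ 2*k+1+1 ≤ 2*k+1 by omega)]
        have hw' := r2 (2*k) le_rfl
        rw [show 2*k+1 - 1 = 2*k by omega, hw']
        exact hadj2.symm
    · intro j hj
      dsimp only
      rcases Nat.eq_zero_or_pos j with h0 | h0
      · subst h0
        rw [if_pos rfl]
        simpa using hx
      · rw [if_neg (by omega), if_pos (by omega)]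
        have := r4 (j-1) (by omega)
        rwa [show n + 1 + (j-1) = n + j by omega] at this
    · intro j hj hj2
      dsimp only
      rcases le_or_gt j (2*k+1) with hle | hgt
      · rw [if_neg (by omega), if_pos hle]
        have := r5 (j-1) (by omega) (by omega)
        rwa [show n + 1 + (2*k - (j-1)) = n + (2*(k+1) - j) by omega] at this
      · have hj' : j = 2*k+2 := by omega
        subst hj'
        rw [if_neg (by omega), if_neg (by omega)]
        rwa [show n + (2*(k+1) - (2*k+2)) = n by omega]⟩
  left_inv p := by
    obtain ⟨h1, h2, h3, h4, h5⟩ := p.2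
    apply Subtype.ext
    funext j
    dsimp only
    rcases Nat.eq_zero_or_pos j with h0 | h0
    · subst h0
      rw [if_pos rfl, h1]
    rcases le_or_gt j (2*k+1) with hle | hgt
    · rw [if_neg (by omega), if_pos hle,
        min_eq_left (show j - 1 + 1 ≤ 2*k+1 by omega), show j - 1 + 1 = j by omega]
    · rw [if_neg (by omega), if_neg (by omega), h2 j (by omega)]
  right_inv it := by
    have r1 : it.1.2 0 = it.1.1.1.1.1 := it.2.1
    have r2 : ∀ j, 2*k ≤ j → it.1.2 j = it.1.1.1.2.1 := it.2.2.1
    apply Subtype.ext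
    apply Prod.ext
    · apply Subtype.ext
      apply Prod.ext
      · apply Subtype.ext
        show (if (1:ℕ) = 0 then x else if 1 ≤ 2*k+1 then it.1.2 (1-1) else y) = _
        rw [if_neg (by omega), if_pos (by omega), show (1:ℕ)-1 = 0 by omega]
        exact r1
      · apply Subtype.ext
        show (if (2*k+1:ℕ) = 0 then x else if 2*k+1 ≤ 2*k+1 then it.1.2 (2*k+1-1) else y) = _
        rw [if_neg (by omega), if_pos le_rfl, show 2*k+1-1 = 2*k by omega]
        exact r2 (2*k) le_rfl
    · funext j
      show (if min (j+1) (2*k+1) = 0 then x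
        else if min (j+1) (2*k+1) ≤ 2*k+1 then it.1.2 (min (j+1) (2*k+1) - 1) else y) = it.1.2 j
      rw [if_neg (by omega), if_pos (min_le_right _ _)]
      rcases le_or_gt (j+1) (2*k+1) with hle | hgt
      · rw [min_eq_left hle, Nat.add_sub_cancel]
      · rw [min_eq_right (by omega), show 2*k+1-1 = 2*k by omega,
          r2 (2*k) le_rfl, r2 j (by omega)]

lemma lamPlus_succ (n k : ℕ) :
    R.lamPlus n (k+1) = (R.Esub n)ᵀ * R.lamPlus (n+1) k * R.Esub n := by
  ext x y
  rw [lamPlus_apply]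
  have e1 : ((R.Esub n)ᵀ * R.lamPlus (n+1) k * R.Esub n) x y
      = ∑ w : ↥(R.sphere (n+1)), ∑ w' : ↥(R.sphere (n+1)),
        R.Esub n w x * R.lamPlus (n+1) k w w' * R.Esub n w' y := by
    calc ((R.Esub n)ᵀ * R.lamPlus (n+1) k * R.Esub n) x y
        = ∑ w' : ↥(R.sphere (n+1)), (∑ w : ↥(R.sphere (n+1)),
            R.Esub n w x * R.lamPlus (n+1) k w w') * R.Esub n w' y := by
          rw [Matrix.mul_apply]
          refine Finset.sum_congr rfl fun w' _ => ?_
          rw [Matrix.mul_apply]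
          refine congrArg (· * _) (Finset.sum_congr rfl fun w _ => ?_)
          rw [Matrix.transpose_apply]
      _ = ∑ w' : ↥(R.sphere (n+1)), ∑ w : ↥(R.sphere (n+1)),
            R.Esub n w x * R.lamPlus (n+1) k w w' * R.Esub n w' y :=
          Finset.sum_congr rfl fun w' _ => Finset.sum_mul _ _ _
      _ = _ := Finset.sum_comm
  have e2 : ∀ w w' : ↥(R.sphere (n+1)), R.Esub n w x * R.lamPlus (n+1) k w w' * R.Esub n w' y
      = if R.G.Adj x.1 w.1 ∧ R.G.Adj y.1 w'.1
          then Nat.card {r : ℕ → V // R.IsForwardPath (n+1) k w.1 w'.1 r} else 0 := by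
    intro w w'
    rw [lamPlus_apply]
    have c1 : R.G.Adj w.1 x.1 ↔ R.G.Adj x.1 w.1 := ⟨SimpleGraph.Adj.symm, SimpleGraph.Adj.symm⟩
    have c2 : R.G.Adj w'.1 y.1 ↔ R.G.Adj y.1 w'.1 := ⟨SimpleGraph.Adj.symm, SimpleGraph.Adj.symm⟩
    by_cases h1 : R.G.Adj x.1 w.1 <;> by_cases h2 : R.G.Adj y.1 w'.1 <;>
      simp [Esub, c1, c2, h1, h2]
  rw [e1, Finset.sum_congr rfl fun w _ => Finset.sum_congr rfl fun w' _ => e2 w w']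
  refine ((sum_sum_ite_card _ _ fun w w' : ↥(R.sphere (n+1)) =>
    finite_fwd (n+1) k w.1 w'.1).trans ?_).symm
  exact (Nat.card_congr (fwdStripBottomEquiv n k x.1 y.1 x.2 y.2)).symm

def tailedFEquiv (n k : ℕ) (x y : ↥(R.sphere n)) :
    {p : ℕ → V // R.IsForwardPath n k x.1 (p (2*k)) p ∧ R.G.Adj (p (2*k)) y.1} ≃
    {it : {z : ↥(R.sphere n) // R.G.Adj z.1 y.1} × (ℕ → V) //
      R.IsForwardPath n k x.1 it.1.1.1 it.2} where
  toFun p := ⟨(⟨⟨p.1 (2*k), fwd_mid_mem p.2.1⟩, p.2.2⟩, p.1), p.2.1⟩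
  invFun it := ⟨it.1.2, fwd_congr_end it.2, by rw [fwd_end it.2]; exact it.1.1.2⟩
  left_inv p := Subtype.ext rfl
  right_inv it := by
    apply Subtype.ext
    apply Prod.ext
    · apply Subtype.ext
      apply Subtype.ext
      exact fwd_end it.2
    · rfl

def headedFEquiv (n k : ℕ) (x y : ↥(R.sphere n)) :
    {p : ℕ → V // R.G.Adj x.1 (p 0) ∧ R.IsForwardPath n k (p 0) y.1 p} ≃
    {it : {z : ↥(R.sphere n) // R.G.Adj x.1 z.1} × (ℕ → V) //
      R.IsForwardPath n k it.1.1.1 y.1 it.2} where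
  toFun p := ⟨(⟨⟨p.1 0, fwd_start_mem p.2.2⟩, p.2.1⟩, p.1), p.2.2⟩
  invFun it := ⟨it.1.2, by rw [fwd_start it.2]; exact it.1.1.2, by rw [fwd_start it.2]; exact it.2⟩
  left_inv p := Subtype.ext rfl
  right_inv it := by
    apply Subtype.ext
    apply Prod.ext
    · apply Subtype.ext
      apply Subtype.ext
      exact fwd_start it.2
    · rfl

def tailedBEquiv (n k : ℕ) (x y : ↥(R.sphere n)) :
    {q : ℕ → V // R.IsBackwardPath n k x.1 (q (2*k)) q ∧ R.G.Adj (q (2*k)) y.1} ≃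
    {it : {z : ↥(R.sphere n) // R.G.Adj z.1 y.1} × (ℕ → V) //
      R.IsBackwardPath n k x.1 it.1.1.1 it.2} where
  toFun q := ⟨(⟨⟨q.1 (2*k), bwd_mid_mem q.2.1⟩, q.2.2⟩, q.1), q.2.1⟩
  invFun it := ⟨it.1.2, bwd_congr_end it.2, by rw [bwd_end it.2]; exact it.1.1.2⟩
  left_inv q := Subtype.ext rfl
  right_inv it := by
    apply Subtype.ext
    apply Prod.ext
    · apply Subtype.ext
      apply Subtype.ext
      exact bwd_end it.2
    · rfl

def headedBEquiv (n k : ℕ) (x y : ↥(R.sphere n)) :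
    {q : ℕ → V // R.G.Adj x.1 (q 0) ∧ R.IsBackwardPath n k (q 0) y.1 q} ≃
    {it : {z : ↥(R.sphere n) // R.G.Adj x.1 z.1} × (ℕ → V) //
      R.IsBackwardPath n k it.1.1.1 y.1 it.2} where
  toFun q := ⟨(⟨⟨q.1 0, bwd_start_mem q.2.2⟩, q.2.1⟩, q.1), q.2.2⟩
  invFun it := ⟨it.1.2, by rw [bwd_start it.2]; exact it.1.1.2, by rw [bwd_start it.2]; exact it.2⟩
  left_inv q := Subtype.ext rfl
  right_inv it := by
    apply Subtype.ext
    apply Prod.ext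
    · apply Subtype.ext
      apply Subtype.ext
      exact bwd_start it.2
    · rfl

def fbEquiv (n k l : ℕ) (x y : ↥(R.sphere n)) :
    {pq : (ℕ → V) × (ℕ → V) //
      R.IsForwardPath n k x.1 (pq.1 (2*k)) pq.1 ∧ R.IsBackwardPath n l (pq.1 (2*k)) y.1 pq.2} ≃
    {it : ↥(R.sphere n) × ((ℕ → V) × (ℕ → V)) //
      R.IsForwardPath n k x.1 it.1.1 it.2.1 ∧ R.IsBackwardPath n l it.1.1 y.1 it.2.2} where
  toFun pq := ⟨(⟨pq.1.1 (2*k), fwd_mid_mem pq.2.1⟩, pq.1), pq.2.1, pq.2.2⟩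
  invFun it := ⟨it.1.2, fwd_congr_end it.2.1, by rw [fwd_end it.2.1]; exact it.2.2⟩
  left_inv pq := Subtype.ext rfl
  right_inv it := by
    apply Subtype.ext
    apply Prod.ext
    · apply Subtype.ext
      exact fwd_end it.2.1
    · rfl

def bfEquiv (n l k : ℕ) (x y : ↥(R.sphere n)) :
    {pq : (ℕ → V) × (ℕ → V) //
      R.IsBackwardPath n l x.1 (pq.1 (2*l)) pq.1 ∧ R.IsForwardPath n k (pq.1 (2*l)) y.1 pq.2} ≃
    {it : ↥(R.sphere n) × ((ℕ → V) × (ℕ → V)) //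
      R.IsBackwardPath n l x.1 it.1.1 it.2.1 ∧ R.IsForwardPath n k it.1.1 y.1 it.2.2} where
  toFun pq := ⟨(⟨pq.1.1 (2*l), bwd_mid_mem pq.2.1⟩, pq.1), pq.2.1, pq.2.2⟩
  invFun it := ⟨it.1.2, bwd_congr_end it.2.1, by rw [bwd_end it.2.1]; exact it.2.2⟩
  left_inv pq := Subtype.ext rfl
  right_inv it := by
    apply Subtype.ext
    apply Prod.ext
    · apply Subtype.ext
      exact bwd_end it.2.1
    · rfl

lemma fbCount_eq (n k l : ℕ) (hl : l ≤ n) (x y : ↥(R.sphere n)) :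
    R.fbCount n k l x.1 y.1 = (R.lamPlus n k * R.lamMinusAll n l) x y := by
  rw [fbCount, Matrix.mul_apply]
  have e : ∀ z : ↥(R.sphere n), R.lamPlus n k x z * R.lamMinusAll n l z y
      = Nat.card {pq : (ℕ → V) × (ℕ → V) //
          R.IsForwardPath n k x.1 z.1 pq.1 ∧ R.IsBackwardPath n l z.1 y.1 pq.2} := by
    intro z
    rw [lamPlus_apply, lamMinusAll_apply l n hl, ← Nat.card_prod]
    exact (Nat.card_congr Equiv.subtypeProdEquivProd).symm
  rw [Finset.sum_congr rfl fun z _ => e z]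
  haveI : ∀ z : ↥(R.sphere n), Finite {pq : (ℕ → V) × (ℕ → V) //
      R.IsForwardPath n k x.1 z.1 pq.1 ∧ R.IsBackwardPath n l z.1 y.1 pq.2} := by
    intro z
    haveI := finite_fwd (R := R) n k x.1 z.1
    haveI := finite_bwd (R := R) n l z.1 y.1
    exact Finite.of_equiv _ (Equiv.subtypeProdEquivProd).symm
  rw [← card_fiber_sum (fun (z : ↥(R.sphere n)) (pq : (ℕ → V) × (ℕ → V)) =>
    R.IsForwardPath n k x.1 z.1 pq.1 ∧ R.IsBackwardPath n l z.1 y.1 pq.2)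
    (fun z => by infer_instance)]
  exact Nat.card_congr (fbEquiv n k l x y)

lemma bfCount_eq (n l k : ℕ) (hl : l ≤ n) (x y : ↥(R.sphere n)) :
    R.bfCount n l k x.1 y.1 = (R.lamMinusAll n l * R.lamPlus n k) x y := by
  rw [bfCount, Matrix.mul_apply]
  have e : ∀ z : ↥(R.sphere n), R.lamMinusAll n l x z * R.lamPlus n k z y
      = Nat.card {pq : (ℕ → V) × (ℕ → V) //
          R.IsBackwardPath n l x.1 z.1 pq.1 ∧ R.IsForwardPath n k z.1 y.1 pq.2} := by
    intro z
    rw [lamPlus_apply, lamMinusAll_apply l n hl, ← Nat.card_prod]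
    exact (Nat.card_congr Equiv.subtypeProdEquivProd).symm
  rw [Finset.sum_congr rfl fun z _ => e z]
  haveI : ∀ z : ↥(R.sphere n), Finite {pq : (ℕ → V) × (ℕ → V) //
      R.IsBackwardPath n l x.1 z.1 pq.1 ∧ R.IsForwardPath n k z.1 y.1 pq.2} := by
    intro z
    haveI := finite_bwd (R := R) n l x.1 z.1
    haveI := finite_fwd (R := R) n k z.1 y.1
    exact Finite.of_equiv _ (Equiv.subtypeProdEquivProd).symm
  rw [← card_fiber_sum (fun (z : ↥(R.sphere n)) (pq : (ℕ → V) × (ℕ → V)) =>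
    R.IsBackwardPath n l x.1 z.1 pq.1 ∧ R.IsForwardPath n k z.1 y.1 pq.2)
    (fun z => by infer_instance)]
  exact Nat.card_congr (bfEquiv n l k x y)

lemma tailedFCount_eq (n k : ℕ) (x y : ↥(R.sphere n)) :
    R.tailedFCount n k x.1 y.1 = (R.lamPlus n k * R.Vsub n) x y := by
  rw [tailedFCount, Matrix.mul_apply]
  have e : ∀ z : ↥(R.sphere n), R.lamPlus n k x z * R.Vsub n z y
      = if R.G.Adj z.1 y.1
          then Nat.card {p : ℕ → V // R.IsForwardPath n k x.1 z.1 p} else 0 := by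
    intro z
    rw [lamPlus_apply]
    by_cases h : R.G.Adj z.1 y.1 <;> simp [Vsub, h]
  rw [Finset.sum_congr rfl fun z _ => e z, sum_ite_eq_subtype]
  rw [← card_fiber_sum (fun (i : {z : ↥(R.sphere n) // R.G.Adj z.1 y.1}) (p : ℕ → V) =>
    R.IsForwardPath n k x.1 i.1.1 p) (fun i => finite_fwd n k x.1 i.1.1)]
  exact Nat.card_congr (tailedFEquiv n k x y)

lemma headedFCount_eq (n k : ℕ) (x y : ↥(R.sphere n)) :
    R.headedFCount n k x.1 y.1 = (R.Vsub n * R.lamPlus n k) x y := by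
  rw [headedFCount, Matrix.mul_apply]
  have e : ∀ z : ↥(R.sphere n), R.Vsub n x z * R.lamPlus n k z y
      = if R.G.Adj x.1 z.1
          then Nat.card {p : ℕ → V // R.IsForwardPath n k z.1 y.1 p} else 0 := by
    intro z
    rw [lamPlus_apply]
    by_cases h : R.G.Adj x.1 z.1 <;> simp [Vsub, h]
  rw [Finset.sum_congr rfl fun z _ => e z, sum_ite_eq_subtype]
  rw [← card_fiber_sum (fun (i : {z : ↥(R.sphere n) // R.G.Adj x.1 z.1}) (p : ℕ → V) =>
    R.IsForwardPath n k i.1.1 y.1 p) (fun i => finite_fwd n k i.1.1 y.1)]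
  exact Nat.card_congr (headedFEquiv n k x y)

lemma tailedBCount_eq (n k : ℕ) (hk : k ≤ n) (x y : ↥(R.sphere n)) :
    R.tailedBCount n k x.1 y.1 = (R.lamMinusAll n k * R.Vsub n) x y := by
  rw [tailedBCount, Matrix.mul_apply]
  have e : ∀ z : ↥(R.sphere n), R.lamMinusAll n k x z * R.Vsub n z y
      = if R.G.Adj z.1 y.1
          then Nat.card {q : ℕ → V // R.IsBackwardPath n k x.1 z.1 q} else 0 := by
    intro z
    rw [lamMinusAll_apply k n hk]
    by_cases h : R.G.Adj z.1 y.1 <;> simp [Vsub, h]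
  rw [Finset.sum_congr rfl fun z _ => e z, sum_ite_eq_subtype]
  rw [← card_fiber_sum (fun (i : {z : ↥(R.sphere n) // R.G.Adj z.1 y.1}) (q : ℕ → V) =>
    R.IsBackwardPath n k x.1 i.1.1 q) (fun i => finite_bwd n k x.1 i.1.1)]
  exact Nat.card_congr (tailedBEquiv n k x y)

lemma headedBCount_eq (n k : ℕ) (hk : k ≤ n) (x y : ↥(R.sphere n)) :
    R.headedBCount n k x.1 y.1 = (R.Vsub n * R.lamMinusAll n k) x y := by
  rw [headedBCount, Matrix.mul_apply]
  have e : ∀ z : ↥(R.sphere n), R.Vsub n x z * R.lamMinusAll n k z y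
      = if R.G.Adj x.1 z.1
          then Nat.card {q : ℕ → V // R.IsBackwardPath n k z.1 y.1 q} else 0 := by
    intro z
    rw [lamMinusAll_apply k n hk]
    by_cases h : R.G.Adj x.1 z.1 <;> simp [Vsub, h]
  rw [Finset.sum_congr rfl fun z _ => e z, sum_ite_eq_subtype]
  rw [← card_fiber_sum (fun (i : {z : ↥(R.sphere n) // R.G.Adj x.1 z.1}) (q : ℕ → V) =>
    R.IsBackwardPath n k i.1.1 y.1 q) (fun i => finite_bwd n k i.1.1 y.1)]
  exact Nat.card_congr (headedBEquiv n k x y)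

lemma fbCount_zero (n k l : ℕ) (h : n < l) (x y : V) : R.fbCount n k l x y = 0 := by
  rw [fbCount]
  haveI : IsEmpty {pq : (ℕ → V) × (ℕ → V) //
      R.IsForwardPath n k x (pq.1 (2*k)) pq.1 ∧ R.IsBackwardPath n l (pq.1 (2*k)) y pq.2} :=
    ⟨fun pq => by have := pq.2.2.1; omega⟩
  exact Nat.card_of_isEmpty

lemma bfCount_zero (n l k : ℕ) (h : n < l) (x y : V) : R.bfCount n l k x y = 0 := by
  rw [bfCount]
  haveI : IsEmpty {pq : (ℕ → V) × (ℕ → V) //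
      R.IsBackwardPath n l x (pq.1 (2*l)) pq.1 ∧ R.IsForwardPath n k (pq.1 (2*l)) y pq.2} :=
    ⟨fun pq => by have := pq.2.1.1; omega⟩
  exact Nat.card_of_isEmpty

lemma tailedBCount_zero (n k : ℕ) (h : n < k) (x y : V) : R.tailedBCount n k x y = 0 := by
  rw [tailedBCount]
  haveI : IsEmpty {q : ℕ → V //
      R.IsBackwardPath n k x (q (2*k)) q ∧ R.G.Adj (q (2*k)) y} :=
    ⟨fun q => by have := q.2.1.1; omega⟩
  exact Nat.card_of_isEmpty

lemma headedBCount_zero (n k : ℕ) (h : n < k) (x y : V) : R.headedBCount n k x y = 0 := by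
  rw [headedBCount]
  haveI : IsEmpty {q : ℕ → V //
      R.G.Adj x (q 0) ∧ R.IsBackwardPath n k (q 0) y q} :=
    ⟨fun q => by have := q.2.2.1; omega⟩
  exact Nat.card_of_isEmpty

lemma commute_plus_minus (hPC : R.PathCommuting) (n k l : ℕ) :
    R.lamPlus n k * R.lamMinusAll n l = R.lamMinusAll n l * R.lamPlus n k := by
  rcases le_or_gt l n with hl | hl
  · ext x y
    rw [← fbCount_eq n k l hl x y, ← bfCount_eq n l k hl x y]
    exact (hPC n x.1 x.2 y.1 y.2 k l).1
  · rw [lamMinusAll_of_gt n l hl, Matrix.one_mul, Matrix.mul_one]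

lemma commute_V_plus (hPC : R.PathCommuting) (n k : ℕ) :
    R.Vsub n * R.lamPlus n k = R.lamPlus n k * R.Vsub n := by
  ext x y
  rw [← headedFCount_eq n k x y, ← tailedFCount_eq n k x y]
  exact ((hPC n x.1 x.2 y.1 y.2 k 0).2.1).symm

lemma commute_V_minus (hPC : R.PathCommuting) (n l : ℕ) :
    R.Vsub n * R.lamMinusAll n l = R.lamMinusAll n l * R.Vsub n := by
  rcases le_or_gt l n with hl | hl
  · ext x y
    rw [← headedBCount_eq n l hl x y, ← tailedBCount_eq n l hl x y]
    exact ((hPC n x.1 x.2 y.1 y.2 l 0).2.2).symm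
  · rw [lamMinusAll_of_gt n l hl, Matrix.one_mul, Matrix.mul_one]

lemma commute_plus_plus (hPC : R.PathCommuting) :
    ∀ k n l : ℕ, R.lamPlus n k * R.lamPlus n l = R.lamPlus n l * R.lamPlus n k := by
  intro k
  induction k with
  | zero =>
    intro n l
    rw [lamPlus_zero, Matrix.one_mul, Matrix.mul_one]
  | succ k ih =>
    intro n l
    cases l with
    | zero => rw [lamPlus_zero, Matrix.one_mul, Matrix.mul_one]
    | succ l =>
      rw [lamPlus_succ n k, lamPlus_succ n l]
      have hMA : R.lamPlus (n+1) k * (R.Esub n * (R.Esub n)ᵀ)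
          = (R.Esub n * (R.Esub n)ᵀ) * R.lamPlus (n+1) k := by
        have h := commute_plus_minus hPC (n+1) k 1
        rwa [lamMinusAll_one n] at h
      have hMB : (R.Esub n * (R.Esub n)ᵀ) * R.lamPlus (n+1) l
          = R.lamPlus (n+1) l * (R.Esub n * (R.Esub n)ᵀ) := by
        have h := commute_plus_minus hPC (n+1) l 1
        rw [lamMinusAll_one n] at h
        exact h.symm
      have hAB : R.lamPlus (n+1) k * R.lamPlus (n+1) l
          = R.lamPlus (n+1) l * R.lamPlus (n+1) k := ih (n+1) l
      have key : R.lamPlus (n+1) k * (R.Esub n * (R.Esub n)ᵀ) * R.lamPlus (n+1) l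
          = R.lamPlus (n+1) l * (R.Esub n * (R.Esub n)ᵀ) * R.lamPlus (n+1) k := by
        rw [hMA, Matrix.mul_assoc, hAB, ← Matrix.mul_assoc, hMB]
      calc (R.Esub n)ᵀ * R.lamPlus (n+1) k * R.Esub n
            * ((R.Esub n)ᵀ * R.lamPlus (n+1) l * R.Esub n)
          = (R.Esub n)ᵀ * (R.lamPlus (n+1) k * (R.Esub n * (R.Esub n)ᵀ)
              * R.lamPlus (n+1) l) * R.Esub n := by
            simp only [Matrix.mul_assoc]
        _ = (R.Esub n)ᵀ * (R.lamPlus (n+1) l * (R.Esub n * (R.Esub n)ᵀ)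
              * R.lamPlus (n+1) k) * R.Esub n := by
            rw [key]
        _ = (R.Esub n)ᵀ * R.lamPlus (n+1) l * R.Esub n
            * ((R.Esub n)ᵀ * R.lamPlus (n+1) k * R.Esub n) := by
            simp only [Matrix.mul_assoc]

lemma commute_minus_minus (hPC : R.PathCommuting) :
    ∀ j n j' : ℕ, R.lamMinusAll n j * R.lamMinusAll n j'
      = R.lamMinusAll n j' * R.lamMinusAll n j := by
  intro j
  induction j with
  | zero =>
    intro n j'
    rw [lamMinusAll_zero, Matrix.one_mul, Matrix.mul_one]
  | succ j ih =>
    intro n j'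
    rcases le_or_gt (j+1) n with hn | hn
    swap
    · rw [lamMinusAll_of_gt n (j+1) hn, Matrix.one_mul, Matrix.mul_one]
    obtain ⟨m, rfl⟩ : ∃ m, n = m + 1 := ⟨n - 1, by omega⟩
    cases j' with
    | zero => rw [lamMinusAll_zero, Matrix.one_mul, Matrix.mul_one]
    | succ j' =>
      rcases le_or_gt (j'+1) (m+1) with hn' | hn'
      swap
      · rw [lamMinusAll_of_gt (m+1) (j'+1) hn', Matrix.one_mul, Matrix.mul_one]
      rw [lamMinusAll_succ m j (by omega), lamMinusAll_succ m j' (by omega)]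
      have hMA : R.lamMinusAll m j * ((R.Esub m)ᵀ * R.Esub m)
          = ((R.Esub m)ᵀ * R.Esub m) * R.lamMinusAll m j := by
        have h := commute_plus_minus hPC m 1 j
        rw [lamPlus_one m] at h
        exact h.symm
      have hMB : ((R.Esub m)ᵀ * R.Esub m) * R.lamMinusAll m j'
          = R.lamMinusAll m j' * ((R.Esub m)ᵀ * R.Esub m) := by
        have h := commute_plus_minus hPC m 1 j'
        rw [lamPlus_one m] at h
        exact h
      have hAB : R.lamMinusAll m j * R.lamMinusAll m j'
          = R.lamMinusAll m j' * R.lamMinusAll m j := ih m j'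
      have key : R.lamMinusAll m j * ((R.Esub m)ᵀ * R.Esub m) * R.lamMinusAll m j'
          = R.lamMinusAll m j' * ((R.Esub m)ᵀ * R.Esub m) * R.lamMinusAll m j := by
        rw [hMA, Matrix.mul_assoc, hAB, ← Matrix.mul_assoc, hMB]
      calc R.Esub m * R.lamMinusAll m j * (R.Esub m)ᵀ
            * (R.Esub m * R.lamMinusAll m j' * (R.Esub m)ᵀ)
          = R.Esub m * (R.lamMinusAll m j * ((R.Esub m)ᵀ * R.Esub m)
              * R.lamMinusAll m j') * (R.Esub m)ᵀ := by
            simp only [Matrix.mul_assoc]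
        _ = R.Esub m * (R.lamMinusAll m j' * ((R.Esub m)ᵀ * R.Esub m)
              * R.lamMinusAll m j) * (R.Esub m)ᵀ := by
            rw [key]
        _ = R.Esub m * R.lamMinusAll m j' * (R.Esub m)ᵀ
            * (R.Esub m * R.lamMinusAll m j * (R.Esub m)ᵀ) := by
            simp only [Matrix.mul_assoc]

end RootedGraph

/-- a rooted graph is path commuting iff for each n the matrices
V_n, Λ_{n,+j}, Λ_{n,-j} (j ≥ 0) all pairwise commute. -/
theorem stmt9 {V : Type*} (R : RootedGraph V) :
    R.PathCommuting ↔
    ∀ n : ℕ, ∀ A B : Matrix ↥(R.sphere n) ↥(R.sphere n) ℕ,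
      (A = R.Vsub n ∨ (∃ j, A = R.lamPlus n j) ∨ (∃ j, A = R.lamMinusAll n j)) →
      (B = R.Vsub n ∨ (∃ j, B = R.lamPlus n j) ∨ (∃ j, B = R.lamMinusAll n j)) →
      A * B = B * A := by
  constructor
  · intro hPC n A B hA hB
    rcases hA with rfl | ⟨j, rfl⟩ | ⟨j, rfl⟩ <;> rcases hB with rfl | ⟨j', rfl⟩ | ⟨j', rfl⟩
    · rfl
    · exact R.commute_V_plus hPC n j'
    · exact R.commute_V_minus hPC n j'
    · exact (R.commute_V_plus hPC n j).symm
    · exact R.commute_plus_plus hPC j n j'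
    · exact R.commute_plus_minus hPC n j j'
    · exact (R.commute_V_minus hPC n j).symm
    · exact (R.commute_plus_minus hPC n j' j).symm
    · exact R.commute_minus_minus hPC j n j'
  · intro H n x hx y hy k l
    refine ⟨?_, ?_, ?_⟩
    · rcases le_or_gt l n with hl | hl
      · have h1 : R.fbCount n k l x y = (R.lamPlus n k * R.lamMinusAll n l) ⟨x, hx⟩ ⟨y, hy⟩ :=
          R.fbCount_eq n k l hl ⟨x, hx⟩ ⟨y, hy⟩
        have h2 : R.bfCount n l k x y = (R.lamMinusAll n l * R.lamPlus n k) ⟨x, hx⟩ ⟨y, hy⟩ :=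
          R.bfCount_eq n l k hl ⟨x, hx⟩ ⟨y, hy⟩
        rw [h1, h2, H n (R.lamPlus n k) (R.lamMinusAll n l)
          (Or.inr (Or.inl ⟨k, rfl⟩)) (Or.inr (Or.inr ⟨l, rfl⟩))]
      · rw [R.fbCount_zero n k l hl, R.bfCount_zero n l k hl]
    · have h1 : R.tailedFCount n k x y = (R.lamPlus n k * R.Vsub n) ⟨x, hx⟩ ⟨y, hy⟩ :=
        R.tailedFCount_eq n k ⟨x, hx⟩ ⟨y, hy⟩
      have h2 : R.headedFCount n k x y = (R.Vsub n * R.lamPlus n k) ⟨x, hx⟩ ⟨y, hy⟩ :=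
        R.headedFCount_eq n k ⟨x, hx⟩ ⟨y, hy⟩
      rw [h1, h2, H n (R.lamPlus n k) (R.Vsub n)
        (Or.inr (Or.inl ⟨k, rfl⟩)) (Or.inl rfl)]
    · rcases le_or_gt k n with hk | hk
      · have h1 : R.tailedBCount n k x y = (R.lamMinusAll n k * R.Vsub n) ⟨x, hx⟩ ⟨y, hy⟩ :=
          R.tailedBCount_eq n k hk ⟨x, hx⟩ ⟨y, hy⟩
        have h2 : R.headedBCount n k x y = (R.Vsub n * R.lamMinusAll n k) ⟨x, hx⟩ ⟨y, hy⟩ :=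
          R.headedBCount_eq n k hk ⟨x, hx⟩ ⟨y, hy⟩
        rw [h1, h2, H n (R.lamMinusAll n k) (R.Vsub n)
          (Or.inr (Or.inr ⟨k, rfl⟩)) (Or.inl rfl)]
      · rw [R.tailedBCount_zero n k hk, R.headedBCount_zero n k hk]
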